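/- arXiv:1412.8691 — 5 statements merged into one kernel-verified Lean document; each statement's English description precedes it below -/
import Mathlib

section
/- If a connected framed 4-valent graph admits a source-sink structure, then it admits exactly two such structures, and they differ by reversing the orientation of every edge. -/
open Relation

/-- A framed 4-valent graph, encoded by its darts (half-edges).
`vtx` sends each dart to its vertex, `e` is the fixed-point-free involution
pairing the two darts of each edge, and `opp` is the fixed-point-free
involution (the framing) pairing opposite darts at each vertex.
Every vertex carries exactly four darts, split into two opposite pairs. -/
structure FGraph where
  V : Type
  D : Type
  vtx : D → V
  e : D → D
  opp : D → D
  e_invol : ∀ d, e (e d) = d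
  e_ne : ∀ d, e d ≠ d
  opp_invol : ∀ d, opp (opp d) = d
  opp_ne : ∀ d, opp d ≠ d
  vtx_opp : ∀ d, vtx (opp d) = vtx d
  four_valent : ∀ v : V, ∃ d d', vtx d = v ∧ vtx d' = v ∧ d' ≠ d ∧ d' ≠ opp d ∧
      ∀ x, vtx x = v → x = d ∨ x = opp d ∨ x = d' ∨ x = opp d'

namespace FGraph

/-- A source-sink structure: an orientation of the edges (recorded on darts:
`o d = true` iff the edge of `d` is oriented away from the vertex of `d`)
such that at every vertex one opposite pair of darts is outgoing and the
other opposite pair is incoming. -/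
def IsSourceSink (Γ : FGraph) (o : Γ.D → Bool) : Prop :=
  (∀ d, o (Γ.e d) = !o d) ∧ (∀ d, o (Γ.opp d) = o d) ∧
  (∀ d d', Γ.vtx d' = Γ.vtx d → d' ≠ d → d' ≠ Γ.opp d → o d' = !o d)

/-- Connectedness: any two darts are joined by a chain of edges and vertices. -/
def Connected (Γ : FGraph) : Prop :=
  ∀ d d' : Γ.D, ReflTransGen (fun x y => y = Γ.e x ∨ Γ.vtx y = Γ.vtx x) d d'

end FGraph

/-- A connected framed 4-valent graph admitting a source-sink
structure admits exactly two of them, differing by reversing every edge. -/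
theorem stmt_0 (Γ : FGraph) [Nonempty Γ.D] (hconn : Γ.Connected)
    (o : Γ.D → Bool) (ho : Γ.IsSourceSink o) :
    Γ.IsSourceSink (fun d => !o d) ∧ (fun d => !o d) ≠ o ∧
      ∀ o' : Γ.D → Bool, Γ.IsSourceSink o' → o' = o ∨ o' = fun d => !o d := by
  obtain ⟨he, hopp, hvtx⟩ := ho
  refine ⟨⟨fun d => by simp [he d], fun d => by simp [hopp d],
      fun d d' h1 h2 h3 => by simp [hvtx d d' h1 h2 h3]⟩, ?_, ?_⟩
  · intro h
    obtain ⟨d⟩ := ‹Nonempty Γ.D›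
    have := congrFun h d
    simp at this
  · intro o' ⟨he', hopp', hvtx'⟩
    have key : ∀ x y, (fun x y => y = Γ.e x ∨ Γ.vtx y = Γ.vtx x) x y →
        (o' x = o x ↔ o' y = o y) := by
      rintro x y (rfl | hv)
      · rw [he', he]
        cases o x <;> cases o' x <;> simp
      · by_cases h1 : y = x
        · subst h1; rfl
        by_cases h2 : y = Γ.opp x
        · subst h2; rw [hopp', hopp]
        · rw [hvtx' x y hv h1 h2, hvtx x y hv h1 h2]
          cases o x <;> cases o' x <;> simp
    have const : ∀ x y, (o' x = o x ↔ o' y = o y) := by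
      intro x y
      induction hconn x y with
      | refl => rfl
      | tail _ h ih => exact ih.trans (key _ _ h)
    obtain ⟨d⟩ := ‹Nonempty Γ.D›
    by_cases h : o' d = o d
    · left; funext x; exact (const d x).mp h
    · right; funext x
      have := (const d x).not.mp h
      cases hx : o x <;> cases hx' : o' x <;> simp_all
end

section
/- Smoothing a framed 4-graph at a vertex preserves the existence of a source-sink structure: if the graph admits a source-sink structure, then any graph obtained by smoothing at a vertex (deleting the vertex and reconnecting the four half-edges into two edges in a way compatible with the framing) also admits a source-sink structure. -/
open Relation

namespace FGraph

variable (Γ : FGraph)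

/-- One step of travelling through the smoothed vertex: if the other end of the
current edge is a dart at the smoothed vertex (`bad`), continue to the dart it
is re-paired with by the smoothing. -/
def SmoothStep (bad : Γ.D → Prop) (pair : Γ.D → Γ.D) (x y : Γ.D) : Prop :=
  bad (Γ.e x) ∧ y = pair (Γ.e x)

/-- `Exits Γ bad pair x y` : starting on dart `x` and passing through the
smoothed vertex as often as needed, the strand emerges at the dart `y`
(not at the smoothed vertex); `x—y` is an edge of the smoothed graph. -/
def Exits (bad : Γ.D → Prop) (pair : Γ.D → Γ.D) (x y : Γ.D) : Prop :=
  ∃ z, Relation.ReflTransGen (Γ.SmoothStep bad pair) x z ∧ ¬ bad (Γ.e z) ∧ y = Γ.e z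

/-- `Γ'` is obtained from `Γ` by a smoothing at the vertex `v`: the vertex is
deleted and its four darts are re-paired into two new connections, each dart
being paired with an adjacent (non-opposite) dart; darts whose strand gets
trapped in a circular component may disappear. -/
structure SmoothingAt (v : Γ.V) (Γ' : FGraph) where
  pair : Γ.D → Γ.D
  φ : Γ'.D → Γ.D
  pair_vtx : ∀ x, Γ.vtx x = v → Γ.vtx (pair x) = v
  pair_invol : ∀ x, Γ.vtx x = v → pair (pair x) = x
  pair_ne : ∀ x, Γ.vtx x = v → pair x ≠ x
  pair_adj : ∀ x, Γ.vtx x = v → pair x ≠ Γ.opp x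
  φ_inj : Function.Injective φ
  φ_avoids : ∀ y, Γ.vtx (φ y) ≠ v
  φ_onto : ∀ x, Γ.vtx x ≠ v →
      (∃ y, φ y = x) ∨ ¬ ∃ z, Γ.Exits (fun u => Γ.vtx u = v) pair x z
  φ_vtx : ∀ y y', Γ'.vtx y' = Γ'.vtx y ↔ Γ.vtx (φ y') = Γ.vtx (φ y)
  φ_opp : ∀ y, φ (Γ'.opp y) = Γ.opp (φ y)
  φ_e : ∀ y, Γ.Exits (fun u => Γ.vtx u = v) pair (φ y) (φ (Γ'.e y))

end FGraph

/-- Smoothing at a vertex preserves the existence of a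
source-sink structure. -/
theorem stmt_2 (Γ : FGraph) (v : Γ.V) (Γ' : FGraph)
    (hsm : Nonempty (Γ.SmoothingAt v Γ'))
    (h : ∃ o, Γ.IsSourceSink o) :
    ∃ o', Γ'.IsSourceSink o' := by
  obtain ⟨sm⟩ := hsm
  obtain ⟨o, he, hopp, hadj⟩ := h
  -- o is invariant under SmoothStep
  have step : ∀ x y, Γ.SmoothStep (fun u => Γ.vtx u = v) sm.pair x y → o y = o x := by
    rintro x y ⟨hb, rfl⟩
    have h1 : o (sm.pair (Γ.e x)) = !o (Γ.e x) := by
      apply hadj (Γ.e x)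
      · rw [sm.pair_vtx _ hb, hb]
      · exact sm.pair_ne _ hb
      · exact sm.pair_adj _ hb
    rw [h1, he, Bool.not_not]
  have chain : ∀ x y, Relation.ReflTransGen (Γ.SmoothStep (fun u => Γ.vtx u = v) sm.pair) x y →
      o y = o x := by
    intro x y h
    induction h with
    | refl => rfl
    | tail _ hs ih => rw [step _ _ hs, ih]
  refine ⟨fun y => o (sm.φ y), ?_, ?_, ?_⟩
  · intro d
    obtain ⟨z, hz, _, hez⟩ := sm.φ_e d
    show o (sm.φ (Γ'.e d)) = !o (sm.φ d)
    rw [hez, he, chain _ _ hz]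
  · intro d
    show o (sm.φ (Γ'.opp d)) = o (sm.φ d)
    rw [sm.φ_opp, hopp]
  · intro d d' hv hne hno
    apply hadj
    · exact (sm.φ_vtx d d').mp hv
    · exact fun hc => hne (sm.φ_inj hc)
    · intro hc
      apply hno
      apply sm.φ_inj
      rw [sm.φ_opp, hc]
end

section
/- If a framed 4-graph admits a checkerboard cellular embedding into some closed oriented surface, then it admits a source-sink structure. -/
open Relation

namespace FGraph

/-- A rotation system on a framed 4-graph: a cyclic ordering of the darts at
each vertex in which opposite darts interleave. Rotation systems correspond
exactly to cellular embeddings into closed oriented surfaces compatible with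
the framing. -/
structure Rotation (Γ : FGraph) where
  ρ : Γ.D → Γ.D
  vtx_ρ : ∀ d, Γ.vtx (ρ d) = Γ.vtx d
  ρρ : ∀ d, ρ (ρ d) = Γ.opp d
  ρ_ne : ∀ d, ρ d ≠ d
  ρ_ne_opp : ∀ d, ρ d ≠ Γ.opp d

/-- The faces of the embedding determined by a rotation system are the orbits
of `d ↦ ρ (e d)`; the embedding is checkerboard if the faces can be 2-colored
(a color function constant along each face boundary walk) so that the two
faces on the two sides of each edge get different colors. -/
def Checkerboard (Γ : FGraph) (r : Γ.Rotation) : Prop :=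
  ∃ col : Γ.D → Bool, (∀ d, col (r.ρ (Γ.e d)) = col d) ∧ ∀ d, col (Γ.e d) = !col d

end FGraph

/-- If a framed 4-graph admits a checkerboard cellular
embedding into some closed oriented surface (i.e. a rotation system whose
face 2-coloring is checkerboard), then it admits a source-sink structure. -/
theorem stmt_3 (Γ : FGraph) (h : ∃ r : Γ.Rotation, Γ.Checkerboard r) :
    ∃ o, Γ.IsSourceSink o := by

  obtain ⟨r, col, hface, hedge⟩ := h
  have hρ : ∀ d, col (r.ρ d) = !col d := by
    intro d
    have h1 := hface (Γ.e d)
    rw [Γ.e_invol] at h1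
    rw [h1, hedge]
  have hopp : ∀ d, col (Γ.opp d) = col d := by
    intro d
    have h1 := hρ (r.ρ d)
    rw [r.ρρ] at h1
    rw [h1, hρ, Bool.not_not]
  refine ⟨col, hedge, hopp, ?_⟩
  intro d d' hv hne hnopp
  have key : d' = r.ρ d ∨ d' = Γ.opp (r.ρ d) := by
    obtain ⟨a, a', ha, ha', hne', hneo, hall⟩ := Γ.four_valent (Γ.vtx d)
    have hd := hall d rfl
    have hr := hall (r.ρ d) (r.vtx_ρ d)
    have hx := hall d' hv
    have hρne := r.ρ_ne d
    have hρneo := r.ρ_ne_opp d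
    have hoi := Γ.opp_invol
    rcases hd with hd | hd | hd | hd <;>
      rcases hr with hr | hr | hr | hr <;>
      rcases hx with hx | hx | hx | hx <;>
      simp_all [Γ.opp_invol]
  have : col (Γ.opp (r.ρ d)) = !col d := by rw [hopp, hρ]
  rcases key with rfl | rfl
  · exact hρ d
  · exact this
end

section
/- If a framed 4-graph admits a source-sink structure, then every cellular embedding of it into any closed oriented surface (compatible with the framing) is checkerboard colorable. -/
open Relation

/-- If a framed 4-graph admits a source-sink structure, then
every cellular embedding of it into a closed oriented surface compatible with
the framing (i.e. every rotation system) is checkerboard colorable. -/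
theorem stmt_4 (Γ : FGraph) (h : ∃ o, Γ.IsSourceSink o) :
    ∀ r : Γ.Rotation, Γ.Checkerboard r := by
  obtain ⟨o, he, _, hv⟩ := h
  intro r
  refine ⟨o, fun d => ?_, he⟩
  have h1 : o (r.ρ (Γ.e d)) = !o (Γ.e d) :=
    hv (Γ.e d) (r.ρ (Γ.e d)) (r.vtx_ρ _) (r.ρ_ne _) (r.ρ_ne_opp _)
  rw [h1, he d, Bool.not_not]
end

section
/- For every group G and every nontrivial element g ∈ G, labeling the unique vertex of the one-vertex framed 4-graph F₁ (the 'figure-eight' curve whose vertex smoothing along the orientation yields two components) by g gives a G-knot not equivalent to the unknot. -/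
open Relation

/-! ## Framed 4-graphs (dart model with a rotation)

A framed 4-valent graph is encoded by its darts: `e` is the fixed-point-free
involution pairing the two darts of each edge, `σ` is a permutation of order 4
rotating the darts around each vertex (vertices are the `σ`-orbits, which
have exactly 4 elements); the framing pairs `d` with the opposite dart
`σ (σ d)`.  The field `circles` records the number of circular
(vertex-free) components. -/
structure FrGraph where
  D : Type
  circles : ℕ
  e : D → D
  σ : D → D
  e_invol : ∀ d, e (e d) = d
  e_ne : ∀ d, e d ≠ d
  σ4 : ∀ d, σ (σ (σ (σ d))) = d
  σ_ne : ∀ d, σ d ≠ d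
  σ2_ne : ∀ d, σ (σ d) ≠ d

namespace FrGraph

/-- Two darts lie on the same unicursal component iff they are related by the
equivalence generated by: same edge, or opposite darts at a vertex. -/
def uniStep (Γ : FrGraph) (x y : Γ.D) : Prop := y = Γ.e x ∨ y = Γ.σ (Γ.σ x)

def UniRel (Γ : FrGraph) : Γ.D → Γ.D → Prop := EqvGen Γ.uniStep

/-- The number of components: unicursal components plus circular components. -/
noncomputable def components (Γ : FrGraph) : ℕ := Nat.card (Quot Γ.uniStep) + Γ.circles

def OneComp (Γ : FrGraph) : Prop := Γ.components = 1
def TwoComp (Γ : FrGraph) : Prop := Γ.components = 2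

/-- The set of darts at the vertex of `d`. -/
def vtxSet (Γ : FrGraph) (d : Γ.D) : Set Γ.D :=
  {x | x = d ∨ x = Γ.σ d ∨ x = Γ.σ (Γ.σ d) ∨ x = Γ.σ (Γ.σ (Γ.σ d))}

/-- Isomorphism of framed 4-graphs (with rotation). -/
structure FrIso (A B : FrGraph) where
  toFun : A.D → B.D
  bij : Function.Bijective toFun
  map_e : ∀ d, toFun (A.e d) = B.e (toFun d)
  map_σ : ∀ d, toFun (A.σ d) = B.σ (toFun d)
  circles_eq : A.circles = B.circles

/-- Disjoint union of framed 4-graphs. -/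
def disjUnion (A B : FrGraph) : FrGraph where
  D := A.D ⊕ B.D
  circles := A.circles + B.circles
  e := Sum.map A.e B.e
  σ := Sum.map A.σ B.σ
  e_invol := by rintro (d | d) <;> simp [A.e_invol, B.e_invol]
  e_ne := by rintro (d | d) <;> simp [A.e_ne, B.e_ne]
  σ4 := by rintro (d | d) <;> simp [A.σ4, B.σ4]
  σ_ne := by rintro (d | d) <;> simp [A.σ_ne, B.σ_ne]
  σ2_ne := by rintro (d | d) <;> simp [A.σ2_ne, B.σ2_ne]

/-- The circle: a single circular component with no vertices. -/
def unknot : FrGraph where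
  D := Empty
  circles := 1
  e := Empty.elim
  σ := Empty.elim
  e_invol := fun d => d.elim
  e_ne := fun d => d.elim
  σ4 := fun d => d.elim
  σ_ne := fun d => d.elim
  σ2_ne := fun d => d.elim

/-! ### Smoothings -/

/-- A step of travel through the smoothed region: if the far end of the current
edge is a `bad` dart (a dart being deleted), continue via the re-pairing `pass`. -/
def PassStep (Γ : FrGraph) (bad : Γ.D → Prop) (pass : Γ.D → Γ.D) (x y : Γ.D) : Prop :=
  bad (Γ.e x) ∧ y = pass (Γ.e x)

/-- The strand starting at dart `x` eventually emerges at the dart `y` not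
deleted by the smoothing; `x—y` becomes an edge of the smoothed graph. -/
def PassExit (Γ : FrGraph) (bad : Γ.D → Prop) (pass : Γ.D → Γ.D) (x y : Γ.D) : Prop :=
  ∃ z, ReflTransGen (Γ.PassStep bad pass) x z ∧ ¬ bad (Γ.e z) ∧ y = Γ.e z

def NoExit (Γ : FrGraph) (bad : Γ.D → Prop) (pass : Γ.D → Γ.D) (x : Γ.D) : Prop :=
  ¬ ∃ y, Γ.PassExit bad pass x y

/-- The number of new circular components created by the smoothing: classes of
trapped deleted darts. -/
noncomputable def newCircles (Γ : FrGraph) (bad : Γ.D → Prop) (pass : Γ.D → Γ.D) : ℕ :=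
  Nat.card (Quot (fun x y : {d : Γ.D // bad d ∧ Γ.NoExit bad pass d} =>
    y.1 = Γ.e x.1 ∨ y.1 = pass x.1))

/-- `Γ'` is obtained from `Γ` by smoothing simultaneously all vertices whose
darts form the (σ-closed) set `S`: each dart of `S` is re-paired with an
adjacent (non-opposite) dart of the same vertex by the involution `pair`,
the vertices of `S` are deleted and the strands reconnected accordingly;
trapped strands become new circular components. -/
structure SmData (Γ : FrGraph) (S : Set Γ.D) (Γ' : FrGraph) where
  pair : Γ.D → Γ.D
  φ : Γ'.D → Γ.D
  S_σ : ∀ x ∈ S, Γ.σ x ∈ S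
  pair_mem : ∀ x ∈ S, pair x ∈ S
  pair_invol : ∀ x ∈ S, pair (pair x) = x
  pair_adj : ∀ x ∈ S, pair x = Γ.σ x ∨ pair x = Γ.σ (Γ.σ (Γ.σ x))
  φ_inj : Function.Injective φ
  φ_avoids : ∀ y, φ y ∉ S
  φ_onto : ∀ x, x ∉ S → (∃ y, φ y = x) ∨ Γ.NoExit (· ∈ S) pair x
  φ_σ : ∀ y, φ (Γ'.σ y) = Γ.σ (φ y)
  φ_e : ∀ y, Γ.PassExit (· ∈ S) pair (φ y) (φ (Γ'.e y))
  circ : Γ'.circles = Γ.circles + Γ.newCircles (· ∈ S) pair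

/-! ### Bigons -/

/-- A bigon: two distinct edges joining two distinct vertices which are
non-opposite at both endpoints. -/
def HasBigon (A : FrGraph) : Prop :=
  ∃ x y : A.D, A.e x = y ∧
    (A.e (A.σ x) = A.σ y ∨ A.e (A.σ x) = A.σ (A.σ (A.σ y))) ∧
    y ∉ A.vtxSet x

end FrGraph

/-! ## G-labelled oriented framed 4-graphs -/

/-- A `G`-graph: an oriented (source-sink) framed 4-graph whose vertices are
labelled by elements of the group `G`.  `lab d` is the label of the vertex of
`d`; `o d = true` iff the edge of `d` is oriented away from the vertex of `d`,
and the source-sink condition states that along each edge the two darts get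
opposite values, while around a vertex the values alternate. -/
structure GGraph (G : Type) [Group G] extends FrGraph where
  lab : D → G
  o : D → Bool
  lab_σ : ∀ d, lab (σ d) = lab d
  o_e : ∀ d, o (e d) = !o d
  o_σ : ∀ d, o (σ d) = !o d

namespace GGraph

variable {G : Type} [Group G]

/-- Isomorphism of `G`-graphs. -/
structure GIso (A B : GGraph G) where
  toFun : A.D → B.D
  bij : Function.Bijective toFun
  map_e : ∀ d, toFun (A.e d) = B.e (toFun d)
  map_σ : ∀ d, toFun (A.σ d) = B.σ (toFun d)
  map_lab : ∀ d, B.lab (toFun d) = A.lab d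
  map_o : ∀ d, B.o (toFun d) = A.o d
  circles_eq : A.circles = B.circles

/-- Data exhibiting `K'` as obtained from `K` by a **first Reidemeister move**:
a new vertex `n` labelled by the unit of `G`, with a small loop (`n 2 — n 3`,
an adjacent pair), is inserted on the edge of `K` containing the dart `d`. -/
structure R1Data (K K' : GGraph G) where
  φ : K.D → K'.D
  n : Fin 4 → K'.D
  d : K.D
  φ_inj : Function.Injective φ
  n_inj : Function.Injective n
  ran : ∀ y : K'.D, (∃ x, φ x = y) ↔ ∀ i, n i ≠ y
  σ_n : ∀ i, K'.σ (n i) = n (i + 1)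
  lab_n : ∀ i, K'.lab (n i) = 1
  e_pres : ∀ x, x ≠ d → x ≠ K.e d → K'.e (φ x) = φ (K.e x)
  e1 : K'.e (φ d) = n 0
  e2 : K'.e (n 2) = n 3
  e3 : K'.e (n 1) = φ (K.e d)
  σ_pres : ∀ x, K'.σ (φ x) = φ (K.σ x)
  lab_pres : ∀ x, K'.lab (φ x) = K.lab x
  o_pres : ∀ x, K'.o (φ x) = K.o x
  circles_eq : K.circles = K'.circles

/-- Data exhibiting `K'` as obtained from `K` by a **second Reidemeister
move**: two new vertices `u, v`, labelled by mutually inverse elements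
`g, g⁻¹`, are inserted forming a bigon (edges `u 2 — v 0` and `u 3 — v 1`) on
the two strands of `K` containing the darts `a` and `b`. -/
structure R2Data (K K' : GGraph G) where
  φ : K.D → K'.D
  u : Fin 4 → K'.D
  v : Fin 4 → K'.D
  a : K.D
  b : K.D
  g : G
  φ_inj : Function.Injective φ
  u_inj : Function.Injective u
  v_inj : Function.Injective v
  uv_ne : ∀ i j, u i ≠ v j
  ran : ∀ y : K'.D, (∃ x, φ x = y) ↔ ∀ i, u i ≠ y ∧ v i ≠ y
  σ_u : ∀ i, K'.σ (u i) = u (i + 1)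
  σ_v : ∀ i, K'.σ (v i) = v (i + 1)
  lab_u : ∀ i, K'.lab (u i) = g
  lab_v : ∀ i, K'.lab (v i) = g⁻¹
  hba : b ≠ a
  hbea : b ≠ K.e a
  e_pres : ∀ x, x ≠ a → x ≠ K.e a → x ≠ b → x ≠ K.e b → K'.e (φ x) = φ (K.e x)
  ea1 : K'.e (φ a) = u 0
  ea2 : K'.e (u 2) = v 0
  ea3 : K'.e (v 2) = φ (K.e a)
  eb1 : K'.e (φ b) = u 1
  eb2 : K'.e (u 3) = v 1
  eb3 : K'.e (v 3) = φ (K.e b)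
  σ_pres : ∀ x, K'.σ (φ x) = φ (K.σ x)
  lab_pres : ∀ x, K'.lab (φ x) = K.lab x
  o_pres : ∀ x, K'.o (φ x) = K.o x
  circles_eq : K.circles = K'.circles

/-- Data exhibiting `K'` as obtained from `K` by a **third Reidemeister
move**: a triangle formed by three vertices `p, q, r` labelled `a, b, c` with
`a * b * c = 1`, whose cyclic order along the source-sink orientation is
`a, b, c`, is pushed to the other side, the labels being replaced by
`a⁻¹, b⁻¹, c⁻¹`. -/
structure R3Data (K K' : GGraph G) where
  φ : K.D → K'.D
  p : Fin 4 → K.D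
  q : Fin 4 → K.D
  r : Fin 4 → K.D
  p' : Fin 4 → K'.D
  q' : Fin 4 → K'.D
  r' : Fin 4 → K'.D
  a : G
  b : G
  c : G
  φ_bij : Function.Bijective φ
  σ_p : ∀ i, K.σ (p i) = p (i + 1)
  σ_q : ∀ i, K.σ (q i) = q (i + 1)
  σ_r : ∀ i, K.σ (r i) = r (i + 1)
  σ_p' : ∀ i, K'.σ (p' i) = p' (i + 1)
  σ_q' : ∀ i, K'.σ (q' i) = q' (i + 1)
  σ_r' : ∀ i, K'.σ (r' i) = r' (i + 1)
  pq_ne : ∀ i j, p i ≠ q j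
  pr_ne : ∀ i j, p i ≠ r j
  qr_ne : ∀ i j, q i ≠ r j
  φ_p : ∀ i, φ (p i) = p' (i + 2)
  φ_q : ∀ i, φ (q i) = q' (i + 2)
  φ_r : ∀ i, φ (r i) = r' (i + 2)
  tpq : K.e (p 1) = q 0
  tqr : K.e (q 1) = r 0
  trp : K.e (p 0) = r 1
  tpq' : K'.e (p' 3) = q' 2
  tqr' : K'.e (q' 3) = r' 2
  trp' : K'.e (p' 2) = r' 3
  e_pres : ∀ x, x ≠ p 0 → x ≠ p 1 → x ≠ q 0 → x ≠ q 1 → x ≠ r 0 → x ≠ r 1 →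
      K'.e (φ x) = φ (K.e x)
  lab_p : ∀ i, K.lab (p i) = a
  lab_q : ∀ i, K.lab (q i) = b
  lab_r : ∀ i, K.lab (r i) = c
  lab_p' : ∀ i, K'.lab (p' i) = a⁻¹
  lab_q' : ∀ i, K'.lab (q' i) = b⁻¹
  lab_r' : ∀ i, K'.lab (r' i) = c⁻¹
  habc : a * b * c = 1
  ori_p : K.o (p 1) = true
  ori_q : K.o (q 1) = true
  ori_r : K.o (r 1) = true
  lab_pres : ∀ x, (∀ i, x ≠ p i ∧ x ≠ q i ∧ x ≠ r i) → K'.lab (φ x) = K.lab x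
  σ_pres : ∀ x, K'.σ (φ x) = φ (K.σ x)
  o_pres : ∀ x, K'.o (φ x) = K.o x
  circles_eq : K.circles = K'.circles

/-- A single `G`-Reidemeister move (in either direction) or an isomorphism. -/
def GMove (K K' : GGraph G) : Prop :=
  Nonempty (R1Data K K') ∨ Nonempty (R1Data K' K) ∨
  Nonempty (R2Data K K') ∨ Nonempty (R2Data K' K) ∨
  Nonempty (R3Data K K') ∨ Nonempty (R3Data K' K) ∨
  Nonempty (GIso K K')

/-- Equivalence of `G`-graphs: `G`-free links are the equivalence classes. -/
def GEquiv : GGraph G → GGraph G → Prop := ReflTransGen GMove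

/-- Relabelling along a group homomorphism. -/
def mapLabels {H : Type} [Group H] (α : G →* H) (K : GGraph G) : GGraph H where
  toFrGraph := K.toFrGraph
  lab := fun d => α (K.lab d)
  o := K.o
  lab_σ := fun d => congrArg α (K.lab_σ d)
  o_e := K.o_e
  o_σ := K.o_σ

end GGraph

open GGraph

/-- The one-vertex figure-eight diagram `F₁` with its vertex labelled `g`:
one vertex, two loops each joining a pair of adjacent darts, so that the
diagram has one unicursal component, admits a source-sink structure, and its
smoothing along the orientation yields two components. -/
def F₁ {G : Type} [Group G] (g : G) : GGraph G where
  D := Fin 4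
  circles := 0
  e := ![1, 0, 3, 2]
  σ := fun d => d + 1
  e_invol := by decide
  e_ne := by decide
  σ4 := by decide
  σ_ne := by decide
  σ2_ne := by decide
  lab := fun _ => g
  o := ![true, false, true, false]
  lab_σ := fun _ => rfl
  o_e := by decide
  o_σ := by decide

namespace Stmt12Aux

variable {G : Type} [Group G]

lemma mem_inv_iff (g a : G) : (a⁻¹ = g ∨ a⁻¹ = g⁻¹) ↔ (a = g ∨ a = g⁻¹) := by
  constructor
  · rintro (h | h)
    · right; rw [← h, inv_inv]
    · left; exact inv_injective h
  · rintro (rfl | rfl)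
    · right; rfl
    · left; rw [inv_inv]

/-- The invariant: number of darts labelled `g` or `g⁻¹`, modulo 8. -/
noncomputable def inv (g : G) (K : GGraph G) : ZMod 8 :=
  (Nat.card {d : K.D // K.lab d = g ∨ K.lab d = g⁻¹} : ZMod 8)

lemma card_eq_of_sum (α β : Type) (f : β ⊕ (Fin 4 ⊕ Fin 4) → α)
    (hf : Function.Bijective f) : (Nat.card α : ZMod 8) = Nat.card β := by
  cases finite_or_infinite β with
  | inl h =>
    have : Finite α := Finite.of_surjective f hf.2
    have h8 : Nat.card (Fin 4 ⊕ Fin 4) = 8 := by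
      simp [Nat.card_sum, Nat.card_eq_fintype_card]
    rw [← Nat.card_eq_of_bijective f hf, Nat.card_sum, h8]
    push_cast
    have : ((8 : ℕ) : ZMod 8) = 0 := by decide
    push_cast at this
    rw [this, add_zero]
  | inr h =>
    have : Infinite α := Infinite.of_injective (fun b => f (Sum.inl b))
      (fun a b hab => Sum.inl.inj (hf.1 hab))
    simp [Nat.card_eq_zero_of_infinite]

lemma inv_r1 {g : G} (hg : g ≠ 1) {K K' : GGraph G} (m : GGraph.R1Data K K') :
    inv g K' = inv g K := by
  have hb : Function.Bijective
      (fun x : {d : K.D // K.lab d = g ∨ K.lab d = g⁻¹} =>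
        (⟨m.φ x.1, by rw [m.lab_pres]; exact x.2⟩ :
          {d : K'.D // K'.lab d = g ∨ K'.lab d = g⁻¹})) := by
    constructor
    · intro x y hxy
      exact Subtype.ext (m.φ_inj (congrArg Subtype.val hxy))
    · rintro ⟨y, hy⟩
      have hn : ∀ i, m.n i ≠ y := by
        intro i hi
        have h1 := m.lab_n i
        rw [hi] at h1
        rw [h1] at hy
        rcases hy with h | h
        · exact hg h.symm
        · exact hg (inv_eq_one.mp h.symm)
      obtain ⟨x, hx⟩ := (m.ran y).mpr hn
      exact ⟨⟨x, by rw [← m.lab_pres, hx]; exact hy⟩, Subtype.ext hx⟩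
  unfold inv
  rw [Nat.card_eq_of_bijective _ hb]

lemma inv_r2 {g : G} {K K' : GGraph G} (m : GGraph.R2Data K K') :
    inv g K' = inv g K := by
  have hφu : ∀ x j, m.φ x ≠ m.u j := fun x j h => ((m.ran (m.u j)).mp ⟨x, h⟩ j).1 rfl
  have hφv : ∀ x j, m.φ x ≠ m.v j := fun x j h => ((m.ran (m.v j)).mp ⟨x, h⟩ j).2 rfl
  by_cases hS : m.g = g ∨ m.g = g⁻¹
  · have hS' : m.g⁻¹ = g ∨ m.g⁻¹ = g⁻¹ := (mem_inv_iff g m.g).mpr hS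
    unfold inv
    refine card_eq_of_sum _ _
      (Sum.elim (fun x => ⟨m.φ x.1, by rw [m.lab_pres]; exact x.2⟩)
        (Sum.elim (fun i => ⟨m.u i, by rw [m.lab_u]; exact hS⟩)
          (fun i => ⟨m.v i, by rw [m.lab_v]; exact hS'⟩))) ⟨?_, ?_⟩
    · rintro (x | i | i) (y | j | j) h <;>
        simp only [Sum.elim_inl, Sum.elim_inr, Subtype.mk.injEq] at h
      · exact congrArg Sum.inl (Subtype.ext (m.φ_inj h))
      · exact absurd h (hφu _ _)
      · exact absurd h (hφv _ _)
      · exact absurd h.symm (hφu _ _)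
      · exact congrArg (Sum.inr ∘ Sum.inl) (m.u_inj h)
      · exact absurd h (m.uv_ne _ _)
      · exact absurd h.symm (hφv _ _)
      · exact absurd h.symm (m.uv_ne _ _)
      · exact congrArg (Sum.inr ∘ Sum.inr) (m.v_inj h)
    · rintro ⟨y, hy⟩
      by_cases hex : ∃ x, m.φ x = y
      · obtain ⟨x, hx⟩ := hex
        exact ⟨Sum.inl ⟨x, by rw [← m.lab_pres, hx]; exact hy⟩, Subtype.ext hx⟩
      · have h2 : ¬ ∀ i, m.u i ≠ y ∧ m.v i ≠ y := fun h => hex ((m.ran y).mpr h)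
        push_neg at h2
        obtain ⟨i, hi⟩ := h2
        by_cases hu : m.u i = y
        · exact ⟨Sum.inr (Sum.inl i), Subtype.ext hu⟩
        · exact ⟨Sum.inr (Sum.inr i), Subtype.ext (hi hu)⟩
  · have hS' : ¬ (m.g⁻¹ = g ∨ m.g⁻¹ = g⁻¹) := fun h => hS ((mem_inv_iff g m.g).mp h)
    have hb : Function.Bijective
        (fun x : {d : K.D // K.lab d = g ∨ K.lab d = g⁻¹} =>
          (⟨m.φ x.1, by rw [m.lab_pres]; exact x.2⟩ :
            {d : K'.D // K'.lab d = g ∨ K'.lab d = g⁻¹})) := by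
      constructor
      · intro x y hxy
        exact Subtype.ext (m.φ_inj (congrArg Subtype.val hxy))
      · rintro ⟨y, hy⟩
        have hn : ∀ i, m.u i ≠ y ∧ m.v i ≠ y := by
          intro i
          constructor
          · intro hi
            have h1 := m.lab_u i
            rw [hi] at h1
            rw [h1] at hy
            exact hS hy
          · intro hi
            have h1 := m.lab_v i
            rw [hi] at h1
            rw [h1] at hy
            exact hS' hy
        obtain ⟨x, hx⟩ := (m.ran y).mpr hn
        exact ⟨⟨x, by rw [← m.lab_pres, hx]; exact hy⟩, Subtype.ext hx⟩
    unfold inv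
    rw [Nat.card_eq_of_bijective _ hb]

lemma inv_r3 {g : G} {K K' : GGraph G} (m : GGraph.R3Data K K') :
    inv g K' = inv g K := by
  unfold inv
  congr 1
  symm
  refine Nat.card_congr ((Equiv.ofBijective m.φ m.φ_bij).subtypeEquiv ?_)
  intro x
  simp only [Equiv.ofBijective_apply]
  by_cases hp : ∃ i, x = m.p i
  · obtain ⟨i, rfl⟩ := hp
    rw [m.φ_p, m.lab_p, m.lab_p']
    exact (mem_inv_iff g m.a).symm
  · by_cases hq : ∃ i, x = m.q i
    · obtain ⟨i, rfl⟩ := hq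
      rw [m.φ_q, m.lab_q, m.lab_q']
      exact (mem_inv_iff g m.b).symm
    · by_cases hr : ∃ i, x = m.r i
      · obtain ⟨i, rfl⟩ := hr
        rw [m.φ_r, m.lab_r, m.lab_r']
        exact (mem_inv_iff g m.c).symm
      · rw [m.lab_pres x (fun i =>
          ⟨fun h => hp ⟨i, h⟩, fun h => hq ⟨i, h⟩, fun h => hr ⟨i, h⟩⟩)]

lemma inv_iso {g : G} {K K' : GGraph G} (m : GGraph.GIso K K') :
    inv g K' = inv g K := by
  unfold inv
  congr 1
  symm
  refine Nat.card_congr ((Equiv.ofBijective m.toFun m.bij).subtypeEquiv ?_)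
  intro x
  simp only [Equiv.ofBijective_apply, m.map_lab]

lemma inv_move {g : G} (hg : g ≠ 1) {K K' : GGraph G} (h : GGraph.GMove K K') :
    inv g K = inv g K' := by
  rcases h with m | m | m | m | m | m | m
  · exact (inv_r1 hg m.some).symm
  · exact inv_r1 hg m.some
  · exact (inv_r2 m.some).symm
  · exact inv_r2 m.some
  · exact (inv_r3 m.some).symm
  · exact inv_r3 m.some
  · exact (inv_iso m.some).symm

lemma inv_equiv {g : G} (hg : g ≠ 1) {K K' : GGraph G} (h : GGraph.GEquiv K K') :
    inv g K = inv g K' := by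
  induction h with
  | refl => rfl
  | tail _ h ih => exact ih.trans (inv_move hg h)

end Stmt12Aux

/-- For every group `G` and every nontrivial `g ∈ G`,
the `G`-knot obtained by labelling the vertex of `F₁` by `g` is not
equivalent to the unknot (the same diagram labelled by the unit, which is
trivialised by the first Reidemeister move). -/
theorem stmt_12 {G : Type} [Group G] (g : G) (hg : g ≠ 1) :
    ¬ GEquiv (F₁ g) (F₁ (1 : G)) := by
  intro h
  have hinv := Stmt12Aux.inv_equiv hg h
  have h1 : Stmt12Aux.inv g (F₁ g) = 4 := by
    unfold Stmt12Aux.inv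
    have e : {d : (F₁ g).D // (F₁ g).lab d = g ∨ (F₁ g).lab d = g⁻¹} ≃ Fin 4 :=
      Equiv.subtypeUnivEquiv (fun _ => Or.inl rfl)
    rw [Nat.card_congr e, Nat.card_eq_fintype_card, Fintype.card_fin]
    decide
  have h0 : Stmt12Aux.inv g (F₁ (1 : G)) = 0 := by
    unfold Stmt12Aux.inv
    haveI hempty : IsEmpty {d : (F₁ (1 : G)).D //
        (F₁ (1 : G)).lab d = g ∨ (F₁ (1 : G)).lab d = g⁻¹} := by
      constructor
      rintro ⟨d, h | h⟩
      · exact hg h.symm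
      · exact hg (inv_eq_one.mp (show g⁻¹ = 1 from h.symm))
    rw [Nat.card_of_isEmpty]
    rfl
  rw [h1, h0] at hinv
  exact absurd hinv (by decide)
end
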